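/- For every p ∈ (0,1) and every ω ∈ ℂ, I_p(ω) = 1 + (1−p)ω + ∑_{N=2}^∞ ((1−p)^N ω^N / (N! · ∏_{n=1}^N (2^n − 1))) · det A_N(p), where the series converges. -/

import Mathlib

open MeasureTheory

/-- The probability measure on `{0,1}` (encoded as `Bool`, `false` ↔ digit `0`,
`true` ↔ digit `1`) giving mass `p` to the digit `0` and mass `1 - p` to the digit `1`. -/
noncomputable def bernoulliBool (p : ℝ) : Measure Bool :=
  ENNReal.ofReal p • Measure.dirac false + ENNReal.ofReal (1 - p) • Measure.dirac true

/-- `ν` is the infinite product, over `n ≥ 1` (indexed here by `ℕ`, where index `n`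
stands for the digit `n+1`), of the Bernoulli measures `bernoulliBool p`:
it is characterized as the projective limit of the finite product measures. -/
def IsBernoulliProduct (p : ℝ) (ν : Measure (ℕ → Bool)) : Prop :=
  IsProjectiveLimit ν fun J : Finset ℕ => Measure.pi fun _ : J => bernoulliBool p

/-- The binary expansion map sending a 0-1 sequence `(x_n)_{n ≥ 1}` to
`∑_{n=1}^∞ x_n 2^{-n}` (index `n : ℕ` stands for the digit `n+1`). -/
noncomputable def binExpand (x : ℕ → Bool) : ℝ :=
  ∑' n : ℕ, if x n then ((2 : ℝ) ^ (n + 1))⁻¹ else 0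

/-- `μ` is the Bernoulli measure `μ_p` on `ℝ`: the pushforward under the binary
expansion map of the infinite product of Bernoulli measures on `{0,1}`. -/
def IsBernoulliMeasure (p : ℝ) (μ : Measure ℝ) : Prop :=
  ∃ ν : Measure (ℕ → Bool), IsBernoulliProduct p ν ∧ μ = ν.map binExpand

/-- The `N × N` real Hessenberg matrix `A_N(p)` (1-indexed in the paper, 0-indexed here):
row `i` (paper row `i+1`) has entries `C(i+1, j)` for `j ≤ i`, the entry
`(1 - 2^{i+1})/(1-p)` at column `j = i+1`, and `0` for `j > i+1`. -/
noncomputable def Amat (N : ℕ) (p : ℝ) : Matrix (Fin N) (Fin N) ℝ := fun i j =>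
  if (j : ℕ) ≤ (i : ℕ) then (Nat.choose ((i : ℕ) + 1) (j : ℕ) : ℝ)
  else if (j : ℕ) = (i : ℕ) + 1 then (1 - 2 ^ ((i : ℕ) + 1)) / (1 - p)
  else 0


open Matrix Filter

set_option maxHeartbeats 1000000

-- weights
noncomputable def wgt (p : ℝ) (b : Bool) : ℝ := if b then 1 - p else p

lemma wgt_nonneg {p : ℝ} (hp : p ∈ Set.Ioo (0:ℝ) 1) (b : Bool) : 0 ≤ wgt p b := by
  cases b <;> simp [wgt] <;> [exact hp.1.le; linarith [hp.2]]

lemma bernoulliBool_singleton {p : ℝ} (hp : p ∈ Set.Ioo (0:ℝ) 1) (b : Bool) :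
    bernoulliBool p {b} = ENNReal.ofReal (wgt p b) := by
  have h1 : p ≤ 1 := hp.2.le
  cases b <;>
    simp [bernoulliBool, wgt, Measure.dirac_apply' _ (by trivial : MeasurableSet ({false} : Set Bool)),
      Measure.dirac_apply' _ (by trivial : MeasurableSet ({true} : Set Bool)),
      Set.indicator_apply]

theorem bernoulliBool_prob {p : ℝ} (hp : p ∈ Set.Ioo (0:ℝ) 1) :
    IsProbabilityMeasure (bernoulliBool p) := by
  constructor
  simp [bernoulliBool]
  rw [← ENNReal.ofReal_add hp.1.le (by linarith [hp.2])]
  norm_num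

lemma summable_binExpand (x : ℕ → Bool) :
    Summable (fun n => if x n then ((2 : ℝ) ^ (n + 1))⁻¹ else 0) := by
  apply Summable.of_nonneg_of_le (fun n => by positivity)
    (fun n => ?_) (summable_geometric_two.mul_left (2⁻¹))
  have : ((2:ℝ) ^ (n+1))⁻¹ = 2⁻¹ * (1/2)^n := by
    rw [pow_succ, mul_inv, one_div, inv_pow]; ring
  split
  · rw [this]
  · positivity

lemma binExpand_nonneg (x : ℕ → Bool) : 0 ≤ binExpand x :=
  tsum_nonneg (fun n => by positivity)

lemma tsum_half_pow : ∑' n : ℕ, ((2:ℝ) ^ (n + 1))⁻¹ = 1 := by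
  have h : ∀ n : ℕ, ((2:ℝ) ^ (n+1))⁻¹ = 2⁻¹ * (1/2)^n := by
    intro n; rw [pow_succ, mul_inv, one_div, inv_pow]; ring
  simp_rw [h]
  rw [tsum_mul_left, tsum_geometric_of_lt_one (by norm_num) (by norm_num)]
  norm_num

lemma binExpand_le_one (x : ℕ → Bool) : binExpand x ≤ 1 := by
  rw [← tsum_half_pow]
  apply Summable.tsum_le_tsum _ (summable_binExpand x) _
  · intro n; split
    · exact le_rfl
    · positivity
  · have := summable_binExpand (fun _ => true)
    simpa using this

noncomputable def psum (n : ℕ) (x : ℕ → Bool) : ℝ :=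
  ∑ k ∈ Finset.range n, if x k then ((2 : ℝ) ^ (k + 1))⁻¹ else 0

lemma measurable_psum (n : ℕ) : Measurable (psum n) := by
  apply Finset.measurable_sum
  intro k _
  exact Measurable.ite (measurableSet_eq_fun (measurable_pi_apply k) measurable_const)
    measurable_const measurable_const

lemma tendsto_psum (x : ℕ → Bool) :
    Filter.Tendsto (fun n => psum n x) Filter.atTop (nhds (binExpand x)) :=
  (summable_binExpand x).hasSum.tendsto_sum_nat

lemma measurable_binExpand : Measurable binExpand :=
  measurable_of_tendsto_metrizable (fun n => measurable_psum n)
    (tendsto_pi_nhds.mpr tendsto_psum)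


lemma psum_nonneg (n : ℕ) (x : ℕ → Bool) : 0 ≤ psum n x :=
  Finset.sum_nonneg (fun k _ => by positivity)

lemma psum_le_one (n : ℕ) (x : ℕ → Bool) : psum n x ≤ 1 :=
  le_trans (Summable.sum_le_tsum _ (fun k _ => by positivity)
    (summable_binExpand x)) (binExpand_le_one x)

noncomputable def vfin (n : ℕ) (f : Fin n → Bool) : ℝ :=
  ∑ i : Fin n, if f i then ((2 : ℝ) ^ ((i : ℕ) + 1))⁻¹ else 0

noncomputable def Efin (p : ℝ) (g : ℝ → ℝ) (n : ℕ) : ℝ :=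
  ∑ f : Fin n → Bool, (∏ i, wgt p (f i)) * g (vfin n f)

lemma vfin_cons (n : ℕ) (b : Bool) (f : Fin n → Bool) :
    vfin (n + 1) (Fin.cons b f) = ((if b then (1:ℝ) else 0) + vfin n f) / 2 := by
  rw [vfin, Fin.sum_univ_succ]
  simp only [Fin.cons_zero, Fin.cons_succ]
  rw [add_div, vfin]
  congr 1
  · split <;> norm_num
  · rw [Finset.sum_div]
    apply Finset.sum_congr rfl
    intro i _
    simp only [Fin.val_succ]
    split
    · rw [pow_succ, mul_inv]
      ring
    · simp

lemma Efin_succ (p : ℝ) (g : ℝ → ℝ) (n : ℕ) :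
    Efin p g (n + 1) =
      p * Efin p (fun x => g (x / 2)) n + (1 - p) * Efin p (fun x => g ((1 + x) / 2)) n := by
  rw [Efin, ← Equiv.sum_comp (Fin.consEquiv (fun _ => Bool))]
  rw [Fintype.sum_prod_type]
  rw [Fintype.sum_bool]
  have keyT : ∑ f : Fin n → Bool,
      (∏ i, wgt p ((Fin.consEquiv (fun _ => Bool)) (true, f) i)) *
        g (vfin (n+1) ((Fin.consEquiv (fun _ => Bool)) (true, f))) =
      wgt p true * ∑ f : Fin n → Bool, (∏ i, wgt p (f i)) * g ((1 + vfin n f) / 2) := by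
    rw [Finset.mul_sum]
    apply Finset.sum_congr rfl
    intro f _
    have hc : (Fin.consEquiv (fun _ : Fin (n+1) => Bool)) (true, f) = Fin.cons true f := rfl
    rw [hc, vfin_cons, Fin.prod_univ_succ]
    simp only [Fin.cons_zero, Fin.cons_succ, if_true]
    ring
  have keyF : ∑ f : Fin n → Bool,
      (∏ i, wgt p ((Fin.consEquiv (fun _ => Bool)) (false, f) i)) *
        g (vfin (n+1) ((Fin.consEquiv (fun _ => Bool)) (false, f))) =
      wgt p false * ∑ f : Fin n → Bool, (∏ i, wgt p (f i)) * g (vfin n f / 2) := by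
    rw [Finset.mul_sum]
    apply Finset.sum_congr rfl
    intro f _
    have hc : (Fin.consEquiv (fun _ : Fin (n+1) => Bool)) (false, f) = Fin.cons false f := rfl
    rw [hc, vfin_cons, Fin.prod_univ_succ]
    simp only [Fin.cons_zero, Fin.cons_succ, if_false, Bool.false_eq_true, zero_add]
    ring
  rw [keyT, keyF]
  have h1 : Efin p (fun x => g (x / 2)) n
      = ∑ f : Fin n → Bool, (∏ i, wgt p (f i)) * g (vfin n f / 2) := rfl
  have h2 : Efin p (fun x => g ((1 + x) / 2)) n
      = ∑ f : Fin n → Bool, (∏ i, wgt p (f i)) * g ((1 + vfin n f) / 2) := rfl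
  rw [h1, h2]
  have hwt : wgt p true = 1 - p := rfl
  have hwf : wgt p false = p := rfl
  rw [hwt, hwf]
  ring

def rEquiv (n : ℕ) : Fin n ≃ ↑(Finset.range n) where
  toFun i := ⟨i, Finset.mem_range.mpr i.isLt⟩
  invFun k := ⟨k, Finset.mem_range.mp k.2⟩
  left_inv i := rfl
  right_inv k := rfl

noncomputable def vsub (n : ℕ) (y : ↑(Finset.range n) → Bool) : ℝ :=
  ∑ k : ↑(Finset.range n), if y k then ((2:ℝ)^((k:ℕ)+1))⁻¹ else 0

lemma psum_eq_vsub (n : ℕ) (x : ℕ → Bool) :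
    psum n x = vsub n ((Finset.range n).restrict x) := by
  rw [psum, vsub, ← Finset.sum_coe_sort]
  rfl

lemma measurable_vsub (n : ℕ) : Measurable (vsub n) := by
  apply Finset.measurable_sum
  intro k _
  exact Measurable.ite (measurableSet_eq_fun (measurable_pi_apply k) measurable_const)
    measurable_const measurable_const

lemma integral_psum {p : ℝ} (hp : p ∈ Set.Ioo (0:ℝ) 1) {ν : Measure (ℕ → Bool)}
    (hν : IsBernoulliProduct p ν) {g : ℝ → ℝ} (hg : Measurable g) (n : ℕ) :
    ∫ x, g (psum n x) ∂ν = Efin p g n := by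
  haveI := bernoulliBool_prob hp
  have h1 : ∫ x, g (psum n x) ∂ν = ∫ x, (g ∘ vsub n) ((Finset.range n).restrict x) ∂ν := by
    apply integral_congr_ae
    filter_upwards with x
    rw [psum_eq_vsub]
    rfl
  rw [h1, ← integral_map (Finset.measurable_restrict _).aemeasurable
    ((hg.comp (measurable_vsub n)).aestronglyMeasurable), hν (Finset.range n)]
  rw [integral_fintype (Integrable.of_finite)]
  have hsing : ∀ y : ↑(Finset.range n) → Bool,
      ((Measure.pi fun _ : ↑(Finset.range n) => bernoulliBool p) {y}).toReal
        = ∏ k, wgt p (y k) := by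
    intro y
    rw [← Set.univ_pi_singleton y, Measure.pi_pi, ENNReal.toReal_prod]
    exact Finset.prod_congr rfl fun k _ => by
      rw [bernoulliBool_singleton hp, ENNReal.toReal_ofReal (wgt_nonneg hp _)]
  have hre : ∀ f : Fin n → Bool,
      (fun y => ((Measure.pi fun _ : ↑(Finset.range n) => bernoulliBool p) {y}).toReal
        • (g ∘ vsub n) y) ((Equiv.arrowCongr (rEquiv n) (Equiv.refl Bool)) f)
      = (∏ i, wgt p (f i)) * g (vfin n f) := by
    intro f
    have he : ∀ k : ↑(Finset.range n),
        (Equiv.arrowCongr (rEquiv n) (Equiv.refl Bool)) f k = f ((rEquiv n).symm k) := fun k => rfl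
    simp only [hsing, smul_eq_mul, Function.comp_apply, he]
    congr 1
    · exact Equiv.prod_comp (rEquiv n).symm (fun i => wgt p (f i))
    · congr 1
      rw [vsub, vfin]
      exact Fintype.sum_equiv (rEquiv n).symm _ _ (fun k => rfl)
  rw [← Equiv.sum_comp (Equiv.arrowCongr (rEquiv n) (Equiv.refl Bool))]
  rw [Efin]
  exact Finset.sum_congr rfl fun f _ => hre f

lemma nu_prob {p : ℝ} (hp : p ∈ Set.Ioo (0:ℝ) 1) {ν : Measure (ℕ → Bool)}
    (hν : IsBernoulliProduct p ν) : IsProbabilityMeasure ν := by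
  haveI := bernoulliBool_prob hp
  exact hν.isProbabilityMeasure

lemma tendsto_Efin {p : ℝ} (hp : p ∈ Set.Ioo (0:ℝ) 1) {ν : Measure (ℕ → Bool)}
    (hν : IsBernoulliProduct p ν) {g : ℝ → ℝ} (hg : Continuous g) :
    Tendsto (fun n => Efin p g n) atTop (nhds (∫ x, g (binExpand x) ∂ν)) := by
  haveI := nu_prob hp hν
  obtain ⟨C, hC⟩ := isCompact_Icc.exists_bound_of_continuousOn
    (hg.continuousOn : ContinuousOn g (Set.Icc (0:ℝ) 1))
  have h := tendsto_integral_of_dominated_convergence (μ := ν)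
    (F := fun n x => g (psum n x)) (f := fun x => g (binExpand x)) (fun _ => C)
    (fun n => ((hg.measurable.comp (measurable_psum n)).aestronglyMeasurable))
    (integrable_const C)
    (fun n => Filter.Eventually.of_forall fun x =>
      hC _ ⟨psum_nonneg n x, psum_le_one n x⟩)
    (Filter.Eventually.of_forall fun x =>
      (hg.tendsto _).comp (tendsto_psum x))
  have he : (fun n => ∫ x, g (psum n x) ∂ν) = fun n => Efin p g n :=
    funext fun n => integral_psum hp hν hg.measurable n
  rwa [he] at h

lemma selfsim {p : ℝ} (hp : p ∈ Set.Ioo (0:ℝ) 1) {ν : Measure (ℕ → Bool)}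
    (hν : IsBernoulliProduct p ν) {g : ℝ → ℝ} (hg : Continuous g) :
    ∫ x, g (binExpand x) ∂ν =
      p * ∫ x, g (binExpand x / 2) ∂ν + (1 - p) * ∫ x, g ((1 + binExpand x) / 2) ∂ν := by
  have hg1 : Continuous (fun x : ℝ => g (x / 2)) := hg.comp (by continuity)
  have hg2 : Continuous (fun x : ℝ => g ((1 + x) / 2)) := hg.comp (by continuity)
  have t0 : Tendsto (fun n => Efin p g (n+1)) atTop (nhds (∫ x, g (binExpand x) ∂ν)) :=
    (tendsto_Efin hp hν hg).comp (tendsto_add_atTop_nat 1)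
  have t1 := tendsto_Efin hp hν hg1
  have t2 := tendsto_Efin hp hν hg2
  have t3 : Tendsto (fun n => Efin p g (n+1)) atTop
      (nhds (p * ∫ x, g (binExpand x / 2) ∂ν + (1 - p) * ∫ x, g ((1 + binExpand x) / 2) ∂ν)) := by
    have := (t1.const_mul p).add (t2.const_mul (1 - p))
    simpa [Efin_succ] using this
  exact tendsto_nhds_unique t0 t3

noncomputable def mom (ν : Measure (ℕ → Bool)) (N : ℕ) : ℝ := ∫ x, (binExpand x) ^ N ∂ν

lemma integrable_mom {ν : Measure (ℕ → Bool)} [IsProbabilityMeasure ν] (N : ℕ) :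
    Integrable (fun x => (binExpand x) ^ N) ν := by
  apply (integrable_const (1:ℝ)).mono'
    ((measurable_binExpand.pow_const N).aestronglyMeasurable)
  filter_upwards with x
  rw [Real.norm_eq_abs, abs_pow, abs_of_nonneg (binExpand_nonneg x)]
  exact pow_le_one₀ (binExpand_nonneg x) (binExpand_le_one x)

lemma mom_zero {ν : Measure (ℕ → Bool)} [IsProbabilityMeasure ν] : mom ν 0 = 1 := by
  simp [mom]

lemma mom_rec {p : ℝ} (hp : p ∈ Set.Ioo (0:ℝ) 1) {ν : Measure (ℕ → Bool)}
    (hν : IsBernoulliProduct p ν) (N : ℕ) :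
    ((2:ℝ) ^ N - 1) * mom ν N = (1 - p) * ∑ k ∈ Finset.range N, (N.choose k : ℝ) * mom ν k := by
  haveI := nu_prob hp hν
  have hss := selfsim hp hν (g := fun x => x ^ N) (continuous_pow N)
  have h2N : ((2:ℝ) ^ N) ≠ 0 := by positivity
  have e1 : ∫ x, (binExpand x / 2) ^ N ∂ν = mom ν N / 2 ^ N := by
    simp_rw [div_pow]
    rw [integral_div]
    rfl
  have e2 : ∫ x, ((1 + binExpand x) / 2) ^ N ∂ν
      = (∑ k ∈ Finset.range (N+1), mom ν k * (N.choose k : ℝ)) / 2 ^ N := by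
    simp_rw [div_pow]
    rw [integral_div]
    congr 1
    have hpt : ∀ x : ℕ → Bool, (1 + binExpand x) ^ N
        = ∑ k ∈ Finset.range (N+1), (binExpand x) ^ k * (N.choose k : ℝ) := by
      intro x
      rw [add_comm, add_pow]
      simp
    simp_rw [hpt]
    rw [integral_finset_sum]
    · exact Finset.sum_congr rfl fun k _ => by rw [integral_mul_const]; rfl
    · intro k _
      exact (integrable_mom k).mul_const _
  have hm : ∫ x, (fun x => x ^ N) (binExpand x) ∂ν = mom ν N := rfl
  rw [hm, e1, e2] at hss
  have hsplit : ∑ k ∈ Finset.range (N+1), mom ν k * (N.choose k : ℝ)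
      = (∑ k ∈ Finset.range N, (N.choose k : ℝ) * mom ν k) + mom ν N := by
    rw [Finset.sum_range_succ, Nat.choose_self]
    simp [mul_comm]
  rw [hsplit] at hss
  have key : (2:ℝ)^N * mom ν N = p * mom ν N
      + (1 - p) * ((∑ k ∈ Finset.range N, (N.choose k : ℝ) * mom ν k) + mom ν N) := by
    have := hss
    field_simp at this
    linear_combination this
  linear_combination key

lemma abs_binExpand_le (x : ℕ → Bool) : ‖binExpand x‖ ≤ 1 := by
  rw [Real.norm_eq_abs, abs_of_nonneg (binExpand_nonneg x)]; exact binExpand_le_one x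

lemma abs_mom_le {ν : Measure (ℕ → Bool)} [IsProbabilityMeasure ν] (N : ℕ) :
    ‖mom ν N‖ ≤ 1 := by
  have := norm_integral_le_of_norm_le_const (μ := ν)
    (f := fun x => (binExpand x) ^ N) (C := 1) ?_
  · simpa [mom] using this
  · filter_upwards with x
    rw [norm_pow]
    exact pow_le_one₀ (norm_nonneg _) (abs_binExpand_le x)

lemma hasSum_exp_mom {ν : Measure (ℕ → Bool)} [IsProbabilityMeasure ν] (ω : ℂ) :
    HasSum (fun N : ℕ => ω ^ N * (mom ν N : ℂ) / (N.factorial : ℂ))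
      (∫ x, Complex.exp (ω * (binExpand x : ℂ)) ∂ν) := by
  set f : ℕ → (ℕ → Bool) → ℂ := fun N x => (ω * (binExpand x : ℂ)) ^ N / (N.factorial : ℂ)
  have hbnd : ∀ N x, ‖f N x‖ ≤ ‖ω‖ ^ N / (N.factorial : ℝ) := by
    intro N x
    rw [norm_div, norm_pow, norm_mul, Complex.norm_natCast, Complex.norm_real]
    have h1 : ‖ω‖ * ‖binExpand x‖ ≤ ‖ω‖ :=
      mul_le_of_le_one_right (norm_nonneg _) (abs_binExpand_le x)
    gcongr
  have hmeas : ∀ N, AEStronglyMeasurable (f N) ν := by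
    intro N
    apply Measurable.aestronglyMeasurable
    exact ((Complex.measurable_ofReal.comp measurable_binExpand).const_mul ω).pow_const N
      |>.div_const _
  have hsum0 : Summable (fun N : ℕ => ‖ω‖ ^ N / (N.factorial : ℝ)) :=
    Real.summable_pow_div_factorial ‖ω‖
  have hne : (∑' N : ℕ, ∫⁻ x, ‖f N x‖₊ ∂ν) ≠ ⊤ := by
    have hle : ∀ N : ℕ, ∫⁻ x, ‖f N x‖₊ ∂ν ≤ ENNReal.ofReal (‖ω‖ ^ N / (N.factorial : ℝ)) := by
      intro N
      calc ∫⁻ x, ‖f N x‖₊ ∂ν ≤ ∫⁻ _, ENNReal.ofReal (‖ω‖ ^ N / (N.factorial : ℝ)) ∂ν := by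
            apply lintegral_mono
            intro x
            show (‖f N x‖₊ : ENNReal) ≤ ENNReal.ofReal (‖ω‖ ^ N / (N.factorial : ℝ))
            rw [← enorm_eq_nnnorm, ← ofReal_norm]
            exact ENNReal.ofReal_le_ofReal (hbnd N x)
        _ = ENNReal.ofReal (‖ω‖ ^ N / (N.factorial : ℝ)) := by
            rw [lintegral_const, measure_univ, mul_one]
    refine ne_top_of_le_ne_top ?_ (ENNReal.tsum_le_tsum hle)
    rw [← ENNReal.ofReal_tsum_of_nonneg (fun N => by positivity) hsum0]
    exact ENNReal.ofReal_ne_top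
  have hit := integral_tsum hmeas hne
  have hpt : ∀ x, (∑' N, f N x) = Complex.exp (ω * (binExpand x : ℂ)) := by
    intro x
    rw [Complex.exp_eq_exp_ℂ, NormedSpace.exp_eq_tsum_div]
  have hI : ∀ N : ℕ, ∫ x, f N x ∂ν = ω ^ N * (mom ν N : ℂ) / (N.factorial : ℂ) := by
    intro N
    have : ∀ x, f N x = (ω ^ N / (N.factorial : ℂ)) * (((binExpand x) ^ N : ℝ) : ℂ) := by
      intro x
      simp only [f, mul_pow]
      push_cast
      ring
    simp_rw [this]
    rw [integral_const_mul]
    rw [show ∫ a, ((binExpand a ^ N : ℝ) : ℂ) ∂ν = ((mom ν N : ℝ) : ℂ) from integral_ofReal]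
    ring
  have hsummable : Summable (fun N : ℕ => ω ^ N * (mom ν N : ℂ) / (N.factorial : ℂ)) := by
    apply Summable.of_norm_bounded hsum0
    intro N
    rw [norm_div, norm_mul, norm_pow, Complex.norm_natCast, Complex.norm_real]
    have h1 : ‖ω‖ ^ N * ‖mom ν N‖ ≤ ‖ω‖ ^ N :=
      mul_le_of_le_one_right (by positivity) (abs_mom_le N)
    gcongr
  rw [hsummable.hasSum_iff]
  have hrw : ∫ x, Complex.exp (ω * (binExpand x : ℂ)) ∂ν = ∫ x, ∑' N, f N x ∂ν := by
    apply integral_congr_ae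
    filter_upwards with x
    rw [hpt]
  rw [hrw, hit]
  exact (tsum_congr hI).symm

lemma neg_prod (M : ℕ) : ∏ i ∈ Finset.range M, ((2:ℝ)^(i+1) - 1)
    = (-1:ℝ)^M * ∏ i ∈ Finset.range M, ((1:ℝ) - 2^(i+1)) := by
  induction M with
  | zero => simp
  | succ m ih => rw [Finset.prod_range_succ, Finset.prod_range_succ, ih, pow_succ]; ring

section detlemma
variable {p : ℝ} {ν : Measure (ℕ → Bool)}
  (hp : p ∈ Set.Ioo (0:ℝ) 1)
  (hmom0 : mom ν 0 = 1)
  (hrec : ∀ N : ℕ, ((2:ℝ) ^ N - 1) * mom ν N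
    = (1 - p) * ∑ k ∈ Finset.range N, (N.choose k : ℝ) * mom ν k)
include hp hmom0 hrec

lemma sum_choose_mom (N : ℕ) :
    ∑ k ∈ Finset.range N, (N.choose k : ℝ) * mom ν k = ((2:ℝ)^N - 1) * mom ν N / (1 - p) := by
  have hp1 : (1:ℝ) - p ≠ 0 := by have := hp.2; intro h; linarith
  rw [eq_div_iff hp1]
  linear_combination -hrec N

lemma Amat_mulVec (M : ℕ) :
    Amat (M+1) p *ᵥ (fun j : Fin (M+1) => mom ν (j : ℕ))
      = (((2:ℝ)^(M+1) - 1) * mom ν (M+1) / (1 - p)) • (Pi.single (Fin.last M) 1 : Fin (M+1) → ℝ) := by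
  have hp1 : (1:ℝ) - p ≠ 0 := by have := hp.2; intro h; linarith
  funext i
  show ∑ j : Fin (M+1), (fun jn : ℕ => (if jn ≤ (i : ℕ) then ((((i : ℕ) + 1).choose jn : ℝ))
          else if jn = (i : ℕ) + 1 then (1 - 2 ^ ((i : ℕ) + 1)) / (1 - p)
          else 0) * mom ν jn) (j : ℕ) = _
  rw [Fin.sum_univ_eq_sum_range (fun jn : ℕ => (if jn ≤ (i : ℕ) then ((((i : ℕ) + 1).choose jn : ℝ))
          else if jn = (i : ℕ) + 1 then (1 - 2 ^ ((i : ℕ) + 1)) / (1 - p)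
          else 0) * mom ν jn) (M+1)]
  by_cases hi : (i : ℕ) = M
  · have h1 : ∀ jn ∈ Finset.range (M+1),
        (if jn ≤ (i : ℕ) then ((((i : ℕ) + 1).choose jn : ℝ))
          else if jn = (i : ℕ) + 1 then (1 - 2 ^ ((i : ℕ) + 1)) / (1 - p) else 0) * mom ν jn
        = ((M+1).choose jn : ℝ) * mom ν jn := by
      intro jn hjn
      rw [Finset.mem_range] at hjn
      rw [if_pos (by omega), hi]
    rw [Finset.sum_congr rfl h1, sum_choose_mom hp hmom0 hrec (M+1)]
    have : i = Fin.last M := Fin.ext (by simpa using hi)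
    rw [this]
    simp
  · have hiM : (i : ℕ) < M := lt_of_le_of_ne (Nat.lt_succ_iff.mp i.isLt) hi
    have hsub : Finset.range ((i:ℕ)+2) ⊆ Finset.range (M+1) := by
      apply Finset.range_subset_range.mpr; omega
    rw [← Finset.sum_subset hsub]
    · rw [Finset.sum_range_succ]
      have h1 : ∀ jn ∈ Finset.range ((i:ℕ)+1),
          (if jn ≤ (i : ℕ) then ((((i : ℕ) + 1).choose jn : ℝ))
            else if jn = (i : ℕ) + 1 then (1 - 2 ^ ((i : ℕ) + 1)) / (1 - p) else 0) * mom ν jn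
          = (((i:ℕ)+1).choose jn : ℝ) * mom ν jn := by
        intro jn hjn
        rw [Finset.mem_range] at hjn
        rw [if_pos (by omega)]
      rw [Finset.sum_congr rfl h1, sum_choose_mom hp hmom0 hrec ((i:ℕ)+1)]
      rw [if_neg (by omega), if_pos rfl]
      have hne : i ≠ Fin.last M := fun h => hi (by rw [h]; simp)
      have hsingle : ((((2:ℝ)^(M+1) - 1) * mom ν (M+1) / (1 - p))
          • (Pi.single (Fin.last M) 1 : Fin (M+1) → ℝ)) i = 0 := by
        simp [Pi.single_eq_of_ne hne]
      rw [hsingle]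
      field_simp
      ring
    · intro jn hjn hnot
      rw [Finset.mem_range] at hjn
      rw [Finset.mem_range, not_lt] at hnot
      rw [if_neg (by omega), if_neg (by omega), zero_mul]

lemma det_Amat_eq (M : ℕ) :
    (Amat (M+1) p).det * (1 - p) ^ (M+1)
      = mom ν (M+1) * ∏ n ∈ Finset.range (M+1), ((2:ℝ)^(n+1) - 1) := by
  have hp1 : (1:ℝ) - p ≠ 0 := by have := hp.2; intro h; linarith
  set A := Amat (M+1) p with hAdef
  set c := ((2:ℝ)^(M+1) - 1) * mom ν (M+1) / (1 - p) with hc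
  have h1 : A *ᵥ (fun j : Fin (M+1) => mom ν (j : ℕ)) = c • (Pi.single (Fin.last M) 1 : Fin (M+1) → ℝ) :=
    Amat_mulVec hp hmom0 hrec M
  have h2 := congrArg (fun v => A.adjugate *ᵥ v) h1
  rw [Matrix.mulVec_mulVec, Matrix.adjugate_mul, Matrix.smul_mulVec, Matrix.one_mulVec,
    Matrix.mulVec_smul, Matrix.mulVec_single] at h2
  have h3 := congrFun h2 0
  simp only [Pi.smul_apply, smul_eq_mul, Fin.val_zero, hmom0, mul_one, MulOpposite.op_one, one_smul, Matrix.col_apply] at h3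
  -- h3 : A.det = c * (A.adjugate 0 (Fin.last M))
  have h4 : A.adjugate 0 (Fin.last M)
      = (-1:ℝ)^M * ∏ i ∈ Finset.range M, ((1 - 2^(i+1)) / (1 - p)) := by
    rw [Matrix.adjugate_apply]
    set B := A.updateRow (Fin.last M) (Pi.single 0 1) with hB
    rw [Matrix.det_succ_row B (Fin.last M)]
    rw [Finset.sum_eq_single (0 : Fin (M+1))]
    · have hB0 : B (Fin.last M) 0 = 1 := by
        rw [hB, Matrix.updateRow_self]
        simp
      rw [hB0]
      have hminor : (B.submatrix (Fin.last M).succAbove (0 : Fin (M+1)).succAbove).det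
          = ∏ i ∈ Finset.range M, ((1 - 2^(i+1)) / (1 - p)) := by
        have hentry : ∀ i j : Fin M,
            B.submatrix (Fin.last M).succAbove (0 : Fin (M+1)).succAbove i j
            = A i.castSucc j.succ := by
          intro i j
          rw [Matrix.submatrix_apply, Fin.succAbove_last, Fin.succAbove_zero, hB,
            Matrix.updateRow_ne (Fin.castSucc_lt_last i).ne]
        have htri : Matrix.BlockTriangular
            (B.submatrix (Fin.last M).succAbove (0 : Fin (M+1)).succAbove) OrderDual.toDual := by
          intro i j hij
          have hij0 : i < j := hij
          have hij' : (i : ℕ) < (j : ℕ) := hij0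
          rw [hentry]
          show Amat (M+1) p _ _ = 0
          rw [Amat]
          simp only [Fin.coe_castSucc, Fin.val_succ]
          rw [if_neg (by omega), if_neg (by omega)]
        rw [Matrix.det_of_lowerTriangular _ htri]
        rw [← Fin.prod_univ_eq_prod_range (fun i => ((1:ℝ) - 2^(i+1)) / (1 - p)) M]
        apply Finset.prod_congr rfl
        intro i _
        rw [hentry]
        show Amat (M+1) p _ _ = _
        rw [Amat]
        simp only [Fin.coe_castSucc, Fin.val_succ]
        rw [if_neg (by omega)]
        norm_num
      rw [hminor]
      simp [Fin.val_last]
    · intro j _ hj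
      have : B (Fin.last M) j = 0 := by
        rw [hB, Matrix.updateRow_self]
        exact Pi.single_eq_of_ne (by simpa using hj.symm ∘ Eq.symm) _
      rw [this]
      ring
    · intro h
      exact absurd (Finset.mem_univ _) h
  have hprodneg : ∏ i ∈ Finset.range M, ((1:ℝ) - 2^(i+1)) / (1 - p)
      = (∏ i ∈ Finset.range M, ((1:ℝ) - 2^(i+1))) / (1 - p)^M := by
    rw [Finset.prod_div_distrib, Finset.prod_const, Finset.card_range]
  rw [h3, h4, hprodneg, Finset.prod_range_succ, neg_prod M, hc]
  field_simp
  ring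

end detlemma

/-- For `p ∈ (0,1)` and `ω ∈ ℂ`, the Taylor series
`I_p(ω) = 1 + (1-p)ω + ∑_{N=2}^∞ ((1-p)^N ω^N / (N! ∏_{n=1}^N (2^n-1))) det A_N(p)`
holds, the series (indexed here by `N : ℕ`, standing for `N+2 ≥ 2`) converging. -/
theorem stmt9 (p : ℝ) (hp : p ∈ Set.Ioo (0 : ℝ) 1) (μ : Measure ℝ)
    (hμ : IsBernoulliMeasure p μ) (ω : ℂ) :
    HasSum
      (fun N : ℕ =>
        (1 - (p : ℂ)) ^ (N + 2) * ω ^ (N + 2) /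
            ((Nat.factorial (N + 2) : ℂ) * ∏ n ∈ Finset.range (N + 2), ((2 : ℂ) ^ (n + 1) - 1)) *
          ((Amat (N + 2) p).det : ℂ))
      ((∫ x in Set.Icc (0 : ℝ) 1, Complex.exp (ω * x) ∂μ) - 1 - (1 - (p : ℂ)) * ω) := by

  obtain ⟨ν, hν, rfl⟩ := hμ
  haveI := nu_prob hp hν
  have hmom0 : mom ν 0 = 1 := mom_zero
  have hrec := mom_rec hp hν
  have hmom1 : mom ν 1 = 1 - p := by
    have h := hrec 1
    simp [Finset.sum_range_one, hmom0] at h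
    linarith
  -- integral over Icc equals integral over ν
  have hint : ∫ x in Set.Icc (0 : ℝ) 1, Complex.exp (ω * x) ∂(ν.map binExpand)
      = ∫ x, Complex.exp (ω * (binExpand x : ℂ)) ∂ν := by
    have hfc : Continuous (fun x : ℝ => Complex.exp (ω * x)) :=
      Complex.continuous_exp.comp (continuous_const.mul Complex.continuous_ofReal)
    rw [setIntegral_map measurableSet_Icc hfc.aestronglyMeasurable
      measurable_binExpand.aemeasurable]
    have hpre : binExpand ⁻¹' Set.Icc (0:ℝ) 1 = Set.univ :=
      Set.eq_univ_of_forall fun x => ⟨binExpand_nonneg x, binExpand_le_one x⟩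
    rw [hpre, Measure.restrict_univ]
  -- term identification
  have hterm : ∀ N : ℕ,
      (1 - (p : ℂ)) ^ (N + 2) * ω ^ (N + 2) /
          ((Nat.factorial (N + 2) : ℂ) * ∏ n ∈ Finset.range (N + 2), ((2 : ℂ) ^ (n + 1) - 1)) *
        ((Amat (N + 2) p).det : ℂ)
      = ω ^ (N + 2) * (mom ν (N + 2) : ℂ) / ((Nat.factorial (N + 2) : ℂ)) := by
    intro N
    have hdet := det_Amat_eq hp hmom0 hrec (N + 1)
    have hdetC : ((Amat (N+2) p).det : ℂ) * (1 - (p:ℂ)) ^ (N+2)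
        = (mom ν (N+2) : ℂ) * ∏ n ∈ Finset.range (N+2), ((2:ℂ)^(n+1) - 1) := by
      have := congrArg (fun r : ℝ => (r : ℂ)) hdet
      push_cast at this ⊢
      convert this using 2
    have hQ : (∏ n ∈ Finset.range (N+2), ((2:ℂ)^(n+1) - 1)) ≠ 0 := by
      apply Finset.prod_ne_zero_iff.mpr
      intro n _
      intro h
      have h2 : ((2:ℂ))^(n+1) = 1 := by linear_combination h
      have h3 : ((2:ℝ))^(n+1) = 1 := by exact_mod_cast h2
      have : (1:ℝ) < 2^(n+1) := one_lt_pow₀ (by norm_num) (by omega)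
      linarith
    have hfac : ((Nat.factorial (N+2) : ℂ)) ≠ 0 :=
      Nat.cast_ne_zero.mpr (Nat.factorial_ne_zero _)
    rw [div_mul_eq_mul_div, div_eq_div_iff (mul_ne_zero hfac hQ) hfac]
    linear_combination ω^(N+2) * (Nat.factorial (N+2) : ℂ) * hdetC
  have htot := hasSum_exp_mom (ν := ν) ω
  have hshift := (hasSum_nat_add_iff' (f := fun N : ℕ => ω ^ N * (mom ν N : ℂ) / (N.factorial : ℂ)) 2).mpr htot
  have hsum2 : ∑ i ∈ Finset.range 2, ω ^ i * (mom ν i : ℂ) / (i.factorial : ℂ)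
      = 1 + (1 - (p:ℂ)) * ω := by
    rw [Finset.sum_range_succ, Finset.sum_range_one, hmom0, hmom1]
    push_cast
    simp [Nat.factorial]
    ring
  rw [hsum2] at hshift
  have : ((∫ x in Set.Icc (0 : ℝ) 1, Complex.exp (ω * x) ∂(ν.map binExpand)) - 1 - (1 - (p : ℂ)) * ω)
      = (∫ x, Complex.exp (ω * (binExpand x : ℂ)) ∂ν) - (1 + (1 - (p:ℂ)) * ω) := by
    rw [hint]; ring
  rw [this]
  refine HasSum.congr_fun ?_ hterm
  exact hshift
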